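/- Let I be a countable index set, ℓ₁, ℓ₂ : I → ℝ positive functions, and suppose for every natural number N the set {i : N ≤ ℓ₁(i) + ℓ₂(i) < N+1} has at most m·(N+1)^k elements (m > 0, k ∈ ℕ). Let α₁, α₂ : I → ℝ satisfy |α₁(i)| ≤ κ·ℓ₁(i) and |α₂(i)| ≤ κ·ℓ₂(i) for some κ > 0. Then for every L > 0 and every real a, the series ∑_{i ∈ I} [ H(ℓ₁(i)+ℓ₂(i), L)·a + K(ℓ₁(i)+ℓ₂(i), L)·(α₁(i)+α₂(i)) ] converges absolutely, where H(u,v) := 1/(1+e^{(u+v)/2}) + 1/(1+e^{(u-v)/2}) and K(u,v) := 1/(1+e^{(u+v)/2}) − 1/(1+e^{(u-v)/2}). -/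
import Mathlib

lemma inv_one_add_exp_le (x : ℝ) : 1 / (1 + Real.exp x) ≤ Real.exp (-x) := by
  rw [Real.exp_neg, ← one_div]
  apply one_div_le_one_div_of_le (Real.exp_pos x) (by linarith [Real.exp_pos x])

lemma inv_one_add_exp_nonneg (x : ℝ) : 0 ≤ 1 / (1 + Real.exp x) := by positivity

lemma HK_bound (u L : ℝ) :
    |(1 / (1 + Real.exp ((u+L)/2)) + 1 / (1 + Real.exp ((u-L)/2)))| ≤
      (Real.exp (L/2) + Real.exp (-L/2)) * Real.exp (-u/2) ∧
    |(1 / (1 + Real.exp ((u+L)/2)) - 1 / (1 + Real.exp ((u-L)/2)))| ≤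
      (Real.exp (L/2) + Real.exp (-L/2)) * Real.exp (-u/2) := by
  have h1 := inv_one_add_exp_le ((u+L)/2)
  have h2 := inv_one_add_exp_le ((u-L)/2)
  have e1 : Real.exp (-((u+L)/2)) = Real.exp (-L/2) * Real.exp (-u/2) := by
    rw [← Real.exp_add]; ring_nf
  have e2 : Real.exp (-((u-L)/2)) = Real.exp (L/2) * Real.exp (-u/2) := by
    rw [← Real.exp_add]; ring_nf
  have n1 := inv_one_add_exp_nonneg ((u+L)/2)
  have n2 := inv_one_add_exp_nonneg ((u-L)/2)
  constructor
  · rw [abs_of_nonneg (by positivity)]; nlinarith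
  · refine (abs_sub _ _).trans ?_
    rw [abs_of_nonneg n1, abs_of_nonneg n2]; nlinarith

noncomputable def H (u v : ℝ) : ℝ :=
  1 / (1 + Real.exp ((u+v)/2)) + 1 / (1 + Real.exp ((u-v)/2))

noncomputable def K (u v : ℝ) : ℝ :=
  1 / (1 + Real.exp ((u+v)/2)) - 1 / (1 + Real.exp ((u-v)/2))

set_option maxHeartbeats 1600000 in
theorem stmt11 (I : Type*) [Countable I] (ℓ₁ ℓ₂ : I → ℝ)
    (hpos : ∀ i, 0 < ℓ₁ i ∧ 0 < ℓ₂ i)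
    (m : ℝ) (hm : 0 < m) (k : ℕ)
    (hfin : ∀ N : ℕ, {i : I | (N : ℝ) ≤ ℓ₁ i + ℓ₂ i ∧ ℓ₁ i + ℓ₂ i < N + 1}.Finite)
    (hcard : ∀ N : ℕ,
      ({i : I | (N : ℝ) ≤ ℓ₁ i + ℓ₂ i ∧ ℓ₁ i + ℓ₂ i < N + 1}.ncard : ℝ) ≤ m * (N + 1) ^ k)
    (α₁ α₂ : I → ℝ) (κ : ℝ) (hκ : 0 < κ)
    (hα : ∀ i, |α₁ i| ≤ κ * ℓ₁ i ∧ |α₂ i| ≤ κ * ℓ₂ i)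
    (L : ℝ) (hL : 0 < L) (a : ℝ) :
    Summable (fun i =>
      |H (ℓ₁ i + ℓ₂ i) L * a + K (ℓ₁ i + ℓ₂ i) L * (α₁ i + α₂ i)|) := by
  set C : ℝ := Real.exp (L/2) + Real.exp (-L/2) with hCdef
  have hC0 : (0:ℝ) < C := by positivity
  set r : ℝ := Real.exp (-(1/2)) with hrdef
  have hr0 : 0 < r := Real.exp_pos _
  have hr1 : r < 1 := Real.exp_lt_one_iff.mpr (by norm_num)
  set f : I → ℝ := fun i => |H (ℓ₁ i + ℓ₂ i) L * a + K (ℓ₁ i + ℓ₂ i) L * (α₁ i + α₂ i)|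
    with hfdef
  have hf0 : 0 ≤ f := fun i => abs_nonneg _
  -- pointwise bound
  have hptw : ∀ i, f i ≤ C * (|a| + κ * (ℓ₁ i + ℓ₂ i)) * Real.exp (-(ℓ₁ i + ℓ₂ i)/2) := by
    intro i
    set u := ℓ₁ i + ℓ₂ i with hu
    have hu0 : 0 < u := by have := hpos i; simp only [hu]; linarith [this.1, this.2]
    obtain ⟨hb1, hb2⟩ := HK_bound u L
    have hαi : |α₁ i + α₂ i| ≤ κ * u := by
      calc |α₁ i + α₂ i| ≤ |α₁ i| + |α₂ i| := abs_add_le _ _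
        _ ≤ κ * ℓ₁ i + κ * ℓ₂ i := add_le_add (hα i).1 (hα i).2
        _ = κ * u := by rw [hu]; ring
    have hHb : |H u L| ≤ C * Real.exp (-u/2) := hb1
    have hKb : |K u L| ≤ C * Real.exp (-u/2) := hb2
    calc f i ≤ |H u L| * |a| + |K u L| * |α₁ i + α₂ i| := by
          simp only [hfdef]
          refine (abs_add_le _ _).trans ?_
          rw [abs_mul, abs_mul]
        _ ≤ (C * Real.exp (-u/2)) * |a| + (C * Real.exp (-u/2)) * (κ * u) := by
          have h1 : |H u L| * |a| ≤ (C * Real.exp (-u/2)) * |a| :=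
            mul_le_mul_of_nonneg_right hHb (abs_nonneg _)
          have h2 : |K u L| * |α₁ i + α₂ i| ≤ (C * Real.exp (-u/2)) * (κ * u) :=
            mul_le_mul hKb hαi (abs_nonneg _) (by positivity)
          linarith
        _ = C * (|a| + κ * u) * Real.exp (-u/2) := by ring
  have hrN : ∀ N : ℕ, r ^ N = Real.exp (-(N:ℝ)/2) := by
    intro N
    rw [hrdef, ← Real.exp_nat_mul]
    ring_nf
  clear hrdef hCdef
  clear_value r C
  -- partition into shells
  set s : ℕ → Set I := fun N => {i : I | (N : ℝ) ≤ ℓ₁ i + ℓ₂ i ∧ ℓ₁ i + ℓ₂ i < N + 1}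
    with hsdef
  have hs : ∀ i : I, ∃! N : ℕ, i ∈ s N := by
    intro i
    have hu0 : 0 < ℓ₁ i + ℓ₂ i := by have := hpos i; linarith [this.1, this.2]
    refine ⟨⌊ℓ₁ i + ℓ₂ i⌋₊, ⟨Nat.floor_le hu0.le, Nat.lt_floor_add_one _⟩, ?_⟩
    intro N hN
    exact ((Nat.floor_eq_iff hu0.le).mpr ⟨hN.1, hN.2⟩).symm
  rw [summable_partition hf0 hs]
  constructor
  · intro N
    haveI := (hfin N).to_subtype
    exact Summable.of_finite
  · -- bound each shell sum
    set M : ℕ → ℝ := fun N => C * (|a| + κ * ((N:ℝ) + 1)) * r ^ N with hMdef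
    have hM0 : ∀ N, 0 ≤ M N := fun N => by positivity
    have hshell : ∀ N, ∀ i ∈ s N, f i ≤ M N := by
      intro N i hi
      have hu0 : 0 < ℓ₁ i + ℓ₂ i := by have := hpos i; linarith [this.1, this.2]
      refine (hptw i).trans ?_
      show _ ≤ C * (|a| + κ * ((N:ℝ) + 1)) * r ^ N
      rw [hrN N]
      have h1 : |a| + κ * (ℓ₁ i + ℓ₂ i) ≤ |a| + κ * ((N:ℝ) + 1) := by
        have := hi.2; nlinarith
      have h2 : Real.exp (-(ℓ₁ i + ℓ₂ i)/2) ≤ Real.exp (-(N:ℝ)/2) := by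
        apply Real.exp_le_exp.mpr; have := hi.1; linarith
      have h3 : 0 ≤ |a| + κ * (ℓ₁ i + ℓ₂ i) := by positivity
      calc C * (|a| + κ * (ℓ₁ i + ℓ₂ i)) * Real.exp (-(ℓ₁ i + ℓ₂ i)/2)
          ≤ C * (|a| + κ * ((N:ℝ) + 1)) * Real.exp (-(N:ℝ)/2) := by
            apply mul_le_mul (mul_le_mul_of_nonneg_left h1 hC0.le) h2 (Real.exp_pos _).le
            positivity
        _ = C * (|a| + κ * ((N:ℝ) + 1)) * Real.exp (-(N:ℝ)/2) := rfl
    have htsum : ∀ N, ∑' i : s N, f i ≤ m * ((N:ℝ) + 1) ^ k * M N := by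
      intro N
      haveI := (hfin N).to_subtype
      have hsum : Summable (fun i : s N => f i) := Summable.of_finite
      have hcardle : ((s N).ncard : ℝ) ≤ m * ((N:ℝ) + 1) ^ k := hcard N
      refine Summable.tsum_le_of_sum_le hsum fun t => ?_
      have htc : (t.card : ℝ) ≤ ((s N).ncard : ℝ) := by
        have h : t.card ≤ Nat.card (s N) := by
          haveI := (hfin N).fintype
          simpa [Nat.card_eq_fintype_card] using Finset.card_le_univ t
        rw [← Nat.card_coe_set_eq]
        exact_mod_cast h
      calc ∑ x ∈ t, f x ≤ t.card • M N :=
            Finset.sum_le_card_nsmul t _ (M N) fun x _ => hshell N x x.2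
        _ = (t.card : ℝ) * M N := nsmul_eq_mul _ _
        _ ≤ ((s N).ncard : ℝ) * M N := mul_le_mul_of_nonneg_right htc (hM0 N)
        _ ≤ m * ((N:ℝ)+1)^k * M N := mul_le_mul_of_nonneg_right hcardle (hM0 N)
    -- summable majorant
    have hmaj : Summable (fun N : ℕ => m * ((N:ℝ) + 1) ^ k * M N) := by
      have h1 : Summable (fun n : ℕ => ((n:ℝ)) ^ (k+1) * r ^ n) :=
        summable_pow_mul_geometric_of_norm_lt_one (k+1)
          (by rw [Real.norm_eq_abs, abs_of_pos hr0]; exact hr1)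
      have h2 : Summable (fun n : ℕ => (((n:ℕ)+1:ℕ):ℝ) ^ (k+1) * r ^ (n+1)) :=
        (summable_nat_add_iff 1).mpr h1
      have h3 : Summable (fun n : ℕ => ((n:ℝ)+1) ^ (k+1) * r ^ n) := by
        refine ((h2.mul_left r⁻¹).congr ?_)
        intro n
        have hrne : r ≠ 0 := ne_of_gt hr0
        push_cast
        rw [pow_succ]
        field_simp
        ring
      refine Summable.of_nonneg_of_le (fun N => mul_nonneg (by positivity) (hM0 N))
        (fun N => ?_) (h3.mul_left (m * C * (|a| + κ)))
      show m * ((N:ℝ) + 1) ^ k * (C * (|a| + κ * ((N:ℝ) + 1)) * r ^ N)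
          ≤ m * C * (|a| + κ) * (((N:ℝ)+1) ^ (k+1) * r ^ N)
      have hN1 : (1:ℝ) ≤ (N:ℝ) + 1 := by have : (0:ℝ) ≤ (N:ℝ) := Nat.cast_nonneg N; linarith
      have key : |a| + κ * ((N:ℝ)+1) ≤ (|a| + κ) * ((N:ℝ)+1) := by nlinarith [abs_nonneg a]
      calc m * ((N:ℝ)+1)^k * (C * (|a| + κ * ((N:ℝ)+1)) * r^N)
          ≤ m * ((N:ℝ)+1)^k * (C * ((|a| + κ) * ((N:ℝ)+1)) * r^N) := by
            apply mul_le_mul_of_nonneg_left _ (by positivity)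
            apply mul_le_mul_of_nonneg_right _ (pow_nonneg hr0.le N)
            exact mul_le_mul_of_nonneg_left key hC0.le
        _ = m * C * (|a| + κ) * (((N:ℝ)+1) ^ (k+1) * r ^ N) := by rw [pow_succ]; ring
    exact Summable.of_nonneg_of_le (fun N => tsum_nonneg (fun i => hf0 i)) htsum hmaj
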